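/- Let q ≠ 0 with q^{2s} = -q⁻² (s = (α,λ)). Then the Shapovalov-type matrix coefficient formula holds: (-1)^{k+m} q^{(k+m)s + m(m-1)+k(k-1)} · ∏_{i=1}^k [s+1-i]_q · [k]_q! · ∏_{i=1}^m [s+1-i]_q · [m]_q! = q^{m(m-2)+k(k-2)} (1/(q-q⁻¹))^{k+m} [2k]_q!! [2m]_q!!, for all nonnegative integers k, m. -/

import Mathlib

open Finset


lemma key17 (q Qs a : ℂ) (hq : q ≠ 0) (hQs : Qs ≠ 0) (ha : a ≠ 0)
    (hs' : Qs^2 * q^2 = -1) :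
    (-1 : ℂ) * Qs * (Qs * q * a⁻¹ - (Qs * q * a⁻¹)⁻¹) * (a - a⁻¹) =
      q⁻¹ * (a^2 - (a^2)⁻¹) := by
  field_simp
  ring_nf
  linear_combination (1 - a^2) * hs'

lemma single17 (q Qs : ℂ) (hq : q ≠ 0) (hQs : Qs ≠ 0)
    (hs' : Qs^2 * q^2 = -1) (n : ℕ) :
    (-1 : ℂ)^n * Qs^n * q^((n:ℤ)*((n:ℤ)-1)) *
      (∏ i ∈ range n, ((Qs * q * (q^(i+1))⁻¹ - (Qs * q * (q^(i+1))⁻¹)⁻¹) / (q - q⁻¹))) *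
      (∏ i ∈ range n, ((q^(i+1) - (q^(i+1))⁻¹) / (q - q⁻¹))) =
    q^((n:ℤ)*((n:ℤ)-2)) * (1/(q - q⁻¹))^n *
      (∏ i ∈ range n, ((q^(2*(i+1)) - (q^(2*(i+1)))⁻¹) / (q - q⁻¹))) := by
  induction n with
  | zero => simp
  | succ n ih =>
    have e1 : ((n+1:ℕ):ℤ)*(((n+1:ℕ):ℤ)-1) = (n:ℤ)*((n:ℤ)-1) + ((2*n:ℕ):ℤ) := by
      push_cast; ring
    have e2 : ((n+1:ℕ):ℤ)*(((n+1:ℕ):ℤ)-2) = (n:ℤ)*((n:ℤ)-2) + ((2*n:ℕ):ℤ) + (-1) := by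
      push_cast; ring
    rw [prod_range_succ, prod_range_succ, prod_range_succ, pow_succ, pow_succ, pow_succ,
      e1, e2, zpow_add₀ hq, zpow_add₀ hq, zpow_add₀ hq, zpow_natCast,
      zpow_neg_one]
    have hk := key17 q Qs (q^(n+1)) hq hQs (pow_ne_zero _ hq) hs'
    rw [show 2*(n+1) = (n+1)*2 from mul_comm _ _, pow_mul]
    linear_combination
      ((-1 : ℂ) * Qs * q^(2*n) *
        ((Qs * q * (q^(n+1))⁻¹ - (Qs * q * (q^(n+1))⁻¹)⁻¹) / (q - q⁻¹)) *
        ((q^(n+1) - (q^(n+1))⁻¹) / (q - q⁻¹))) * ih +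
      (q^((n:ℤ)*((n:ℤ)-2)) * (1/(q - q⁻¹))^n *
        (∏ i ∈ range n, ((q^(2*(i+1)) - (q^(2*(i+1)))⁻¹) / (q - q⁻¹))) *
        q^(2*n) * (1/(q - q⁻¹))^2) * hk

/-- The Shapovalov-type matrix coefficient formula:
(-1)^{k+m} q^{(k+m)s+m(m-1)+k(k-1)} ∏[s+1-i]_q [k]_q! ∏[s+1-i]_q [m]_q!
  = q^{m(m-2)+k(k-2)} (q-q⁻¹)^{-(k+m)} [2k]_q!! [2m]_q!!,
where Qs = q^s is a fixed square root of -q⁻². -/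
theorem stmt17 (q Qs : ℂ) (hq : q ≠ 0)
    (hroot : ∀ n : ℕ, 0 < n → q^n ≠ 1)
    (hs : Qs^2 = -(q⁻¹^2)) (k m : ℕ) :
    (-1 : ℂ)^(k+m) * Qs^(k+m) *
      q^((k:ℤ)*((k:ℤ)-1) + (m:ℤ)*((m:ℤ)-1)) *
      (∏ i ∈ range k, ((Qs * q * (q^(i+1))⁻¹ - (Qs * q * (q^(i+1))⁻¹)⁻¹) / (q - q⁻¹))) *
      (∏ i ∈ range k, ((q^(i+1) - (q^(i+1))⁻¹) / (q - q⁻¹))) *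
      (∏ i ∈ range m, ((Qs * q * (q^(i+1))⁻¹ - (Qs * q * (q^(i+1))⁻¹)⁻¹) / (q - q⁻¹))) *
      (∏ i ∈ range m, ((q^(i+1) - (q^(i+1))⁻¹) / (q - q⁻¹))) =
    q^((k:ℤ)*((k:ℤ)-2) + (m:ℤ)*((m:ℤ)-2)) * (1/(q - q⁻¹))^(k+m) *
      (∏ i ∈ range k, ((q^(2*(i+1)) - (q^(2*(i+1)))⁻¹) / (q - q⁻¹))) *
      (∏ i ∈ range m, ((q^(2*(i+1)) - (q^(2*(i+1)))⁻¹) / (q - q⁻¹))) := by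
  have hQs : Qs ≠ 0 := by
    intro h; rw [h] at hs; simp at hs
    exact hq hs
  have hs' : Qs^2 * q^2 = -1 := by
    rw [hs]; field_simp
  have s1 := single17 q Qs hq hQs hs' k
  have s2 := single17 q Qs hq hQs hs' m
  rw [zpow_add₀ hq, zpow_add₀ hq, pow_add, pow_add, pow_add]
  linear_combination
    (((-1 : ℂ)^m * Qs^m * q^((m:ℤ)*((m:ℤ)-1)) *
      (∏ i ∈ range m, ((Qs * q * (q^(i+1))⁻¹ - (Qs * q * (q^(i+1))⁻¹)⁻¹) / (q - q⁻¹))) *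
      (∏ i ∈ range m, ((q^(i+1) - (q^(i+1))⁻¹) / (q - q⁻¹)))) ) * s1 +
    ((q^((k:ℤ)*((k:ℤ)-2)) * (1/(q - q⁻¹))^k *
      (∏ i ∈ range k, ((q^(2*(i+1)) - (q^(2*(i+1)))⁻¹) / (q - q⁻¹))))) * s2
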